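/- In the case of constant pilot power $P_m = P$ for all $m$: under $\mathsf{H}_1$ with $h \sim \mathcal{N}(\mu/2, \sigma^2/2)$ marginalized, the log-likelihood ratio of the observations $y_1,\dots,y_t$ against $\mathsf{H}_0$ equals $L_t = \frac{(V_t + \frac{\mu}{2}\frac{N_0}{\sigma^2})^2}{N_0 (U_t + \frac{N_0}{\sigma^2})} - \frac{\mu^2}{4\sigma^2} - \frac{1}{2}\log\left(\frac{\sigma^2}{N_0} U_t + 1\right)$, where $U_t = Pt$ and $V_t = \sum_{m=1}^t y_m$. -/

import Mathlib

open MeasureTheory ProbabilityTheory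
open scoped NNReal ENNReal

open Real in
lemma integral_exp_quad {c : ℝ} (hc : 0 < c) (d : ℝ) :
    ∫ x : ℝ, Real.exp (-c * x ^ 2 + d * x) = Real.sqrt (π / c) * Real.exp (d ^ 2 / (4 * c)) := by
  have h1 : ∀ x : ℝ, -c * x ^ 2 + d * x = -c * (x - d / (2 * c)) ^ 2 + d ^ 2 / (4 * c) := by
    intro x; field_simp; ring
  simp_rw [h1, Real.exp_add, integral_mul_const]
  congr 1
  rw [integral_sub_right_eq_self (μ := volume) (fun x => Real.exp (-c * x ^ 2)) (d / (2 * c))]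
  exact integral_gaussian c

open Real in
lemma integral_exp_quad_gaussian (m : ℝ) {s : ℝ} (hs : 0 < s) {b : ℝ} (hb : 0 ≤ b) (a : ℝ) :
    ∫ h, Real.exp (-b * h ^ 2 + a * h) ∂(gaussianReal m s.toNNReal)
      = (Real.sqrt (2 * s * (b + 1 / (2 * s))))⁻¹ *
        Real.exp ((a + m / s) ^ 2 / (4 * (b + 1 / (2 * s))) - m ^ 2 / (2 * s)) := by
  have hsne : s.toNNReal ≠ 0 := by
    simp [Real.toNNReal_eq_zero, not_le, hs]
  have hcoe : ((s.toNNReal : ℝ)) = s := Real.coe_toNNReal _ hs.le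
  have hc : 0 < b + 1 / (2 * s) := by positivity
  rw [gaussianReal_of_var_ne_zero _ hsne]
  have hd : gaussianPDF m s.toNNReal =
      fun x => ((Real.toNNReal (gaussianPDFReal m s.toNNReal x) : ℝ≥0) : ℝ≥0∞) := by
    ext x; simp [gaussianPDF, ENNReal.ofReal]
  rw [hd, integral_withDensity_eq_integral_smul
    ((measurable_gaussianPDFReal m s.toNNReal).real_toNNReal)]
  have hpt : ∀ x : ℝ, (Real.toNNReal (gaussianPDFReal m s.toNNReal x) : ℝ≥0)
        • Real.exp (-b * x ^ 2 + a * x)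
      = (Real.sqrt (2 * π * s))⁻¹ * Real.exp (-m ^ 2 / (2 * s)) *
        Real.exp (-(b + 1 / (2 * s)) * x ^ 2 + (a + m / s) * x) := by
    intro x
    rw [NNReal.smul_def, smul_eq_mul,
      Real.coe_toNNReal _ (gaussianPDFReal_nonneg _ _ _), gaussianPDFReal, hcoe]
    rw [mul_assoc _ (rexp _) (rexp _), ← Real.exp_add, mul_assoc _ (rexp _) (rexp _), ← Real.exp_add]
    rw [mul_eq_mul_left_iff, Real.exp_eq_exp]
    left
    field_simp
    ring
  simp_rw [hpt]
  rw [MeasureTheory.integral_const_mul, integral_exp_quad hc]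
  rw [show ((a + m / s) ^ 2 / (4 * (b + 1 / (2 * s))) - m ^ 2 / (2 * s))
      = -m ^ 2 / (2 * s) + (a + m / s) ^ 2 / (4 * (b + 1 / (2 * s))) by ring, Real.exp_add]
  have hsqrt : (Real.sqrt (2 * π * s))⁻¹ * Real.sqrt (π / (b + 1 / (2 * s)))
      = (Real.sqrt (2 * s * (b + 1 / (2 * s))))⁻¹ := by
    rw [← Real.sqrt_inv, ← Real.sqrt_mul (by positivity), ← Real.sqrt_inv]
    congr 1
    rw [mul_inv, mul_inv]
    rw [div_eq_mul_inv]
    field_simp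
  calc (Real.sqrt (2 * π * s))⁻¹ * Real.exp (-m ^ 2 / (2 * s)) *
        (Real.sqrt (π / (b + 1 / (2 * s))) * Real.exp ((a + m / s) ^ 2 / (4 * (b + 1 / (2 * s)))))
      = ((Real.sqrt (2 * π * s))⁻¹ * Real.sqrt (π / (b + 1 / (2 * s)))) *
        (Real.exp (-m ^ 2 / (2 * s)) * Real.exp ((a + m / s) ^ 2 / (4 * (b + 1 / (2 * s))))) := by
        ring
    _ = _ := by rw [hsqrt]



/-- with constant pilot power `P`, the log-likelihood ratio of
`y₁,…,y_t` under H₁ (with `h ~ 𝒩(μ/2, σ²/2)` marginalized) against H₀ equals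
`(V_t + (μ/2)(N₀/σ²))²/(N₀(U_t + N₀/σ²)) - μ²/(4σ²) - (1/2) log((σ²/N₀) U_t + 1)`,
where `U_t = P t` and `V_t = ∑ y_m`. -/
theorem stmt_5 (t : ℕ) (P N0 μ σ2 : ℝ) (hP : 0 < P) (hN0 : 0 < N0) (hσ2 : 0 < σ2)
    (f0 f1 : (Fin t → ℝ) → ℝ)
    (hf0 : ∀ y, f0 y = ∏ m, gaussianPDFReal 0 (P * N0 / 2).toNNReal (y m))
    (hf1 : ∀ y, f1 y = ∫ h, (∏ m, gaussianPDFReal (h * P) (P * N0 / 2).toNNReal (y m))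
        ∂(gaussianReal (μ / 2) (σ2 / 2).toNNReal))
    (Ut : ℝ) (hU : Ut = P * t) :
    ∀ y : Fin t → ℝ,
      Real.log (f1 y / f0 y) =
        ((∑ m, y m) + μ / 2 * (N0 / σ2)) ^ 2 / (N0 * (Ut + N0 / σ2))
          - μ ^ 2 / (4 * σ2) - 1 / 2 * Real.log (σ2 / N0 * Ut + 1) := by

  intro y
  have hvpos : (0:ℝ) < P * N0 / 2 := by positivity
  have hvne : (P * N0 / 2).toNNReal ≠ 0 := by
    simp [Real.toNNReal_eq_zero, not_le, hvpos]
  have hvcoe : ((P * N0 / 2).toNNReal : ℝ) = P * N0 / 2 := Real.coe_toNNReal _ hvpos.le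
  set V := ∑ m, y m with hV
  have factor : ∀ (h x : ℝ), gaussianPDFReal (h * P) (P * N0 / 2).toNNReal x
      = gaussianPDFReal 0 (P * N0 / 2).toNNReal x
        * Real.exp (-(P / N0) * h ^ 2 + (2 * h / N0) * x) := by
    intro h x
    rw [gaussianPDFReal, gaussianPDFReal, hvcoe,
      mul_assoc _ (Real.exp _) (Real.exp _), ← Real.exp_add, mul_eq_mul_left_iff]
    left
    rw [Real.exp_eq_exp]
    field_simp
    ring
  have key : ∀ h : ℝ, (∏ m, gaussianPDFReal (h * P) (P * N0 / 2).toNNReal (y m))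
      = f0 y * Real.exp (-(P * t / N0) * h ^ 2 + (2 * V / N0) * h) := by
    intro h
    calc (∏ m, gaussianPDFReal (h * P) (P * N0 / 2).toNNReal (y m))
        = ∏ m, (gaussianPDFReal 0 (P * N0 / 2).toNNReal (y m)
            * Real.exp (-(P / N0) * h ^ 2 + (2 * h / N0) * (y m))) :=
          Finset.prod_congr rfl (fun m _ => factor h (y m))
      _ = (∏ m, gaussianPDFReal 0 (P * N0 / 2).toNNReal (y m))
            * ∏ m, Real.exp (-(P / N0) * h ^ 2 + (2 * h / N0) * (y m)) :=
          Finset.prod_mul_distrib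
      _ = f0 y * Real.exp (∑ m, (-(P / N0) * h ^ 2 + (2 * h / N0) * (y m))) := by
          rw [← hf0, Real.exp_sum]
      _ = f0 y * Real.exp (-(P * t / N0) * h ^ 2 + (2 * V / N0) * h) := by
          congr 1
          rw [Finset.sum_add_distrib, Finset.sum_const, Finset.card_univ, Fintype.card_fin,
            nsmul_eq_mul, ← Finset.mul_sum, ← hV]
          ring
  have hspos : (0:ℝ) < σ2 / 2 := by positivity
  have hb : (0:ℝ) ≤ P * t / N0 := by positivity
  have hcpos : (0:ℝ) < P * t / N0 + 1 / (2 * (σ2 / 2)) := by positivity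
  have hXpos : (0:ℝ) < 2 * (σ2 / 2) * (P * t / N0 + 1 / (2 * (σ2 / 2))) := by positivity
  have hf1y : f1 y = f0 y *
      ((Real.sqrt (2 * (σ2 / 2) * (P * t / N0 + 1 / (2 * (σ2 / 2)))))⁻¹ *
        Real.exp ((2 * V / N0 + (μ / 2) / (σ2 / 2)) ^ 2 / (4 * (P * t / N0 + 1 / (2 * (σ2 / 2))))
          - (μ / 2) ^ 2 / (2 * (σ2 / 2)))) := by
    rw [hf1]
    simp_rw [key]
    rw [MeasureTheory.integral_const_mul,
      integral_exp_quad_gaussian (μ / 2) hspos hb (2 * V / N0)]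
  have hf0pos : 0 < f0 y := by
    rw [hf0]
    exact Finset.prod_pos fun m _ => gaussianPDFReal_pos _ _ _ hvne
  rw [hf1y, mul_div_cancel_left₀ _ hf0pos.ne',
    Real.log_mul (by positivity) (Real.exp_pos _).ne', Real.log_inv, Real.log_exp,
    Real.log_sqrt hXpos.le]
  have hUpos : (0:ℝ) ≤ Ut := by rw [hU]; positivity
  have hden : (0:ℝ) < Ut + N0 / σ2 := by positivity
  have hX : 2 * (σ2 / 2) * (P * t / N0 + 1 / (2 * (σ2 / 2))) = σ2 / N0 * Ut + 1 := by
    rw [hU]; field_simp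
  have hE1 : (2 * V / N0 + (μ / 2) / (σ2 / 2)) ^ 2 / (4 * (P * t / N0 + 1 / (2 * (σ2 / 2))))
      = (V + μ / 2 * (N0 / σ2)) ^ 2 / (N0 * (Ut + N0 / σ2)) := by
    rw [hU, div_eq_div_iff (by positivity) (by rw [← hU]; positivity)]
    field_simp
    ring
  have hE2 : (μ / 2) ^ 2 / (2 * (σ2 / 2)) = μ ^ 2 / (4 * σ2) := by
    field_simp
    norm_num
  rw [hX, hE1, hE2]
  ring
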